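/- arXiv:2203.10684 — 2 statements merged into one kernel-verified Lean document; each statement's English description precedes it below -/
import Mathlib

section
/- Let d_1 > … > d_k and e_1 > … > e_l be positive integers, ν_1,…,ν_k and μ_1,…,μ_l nonzero integers, and let m > 1 be an integer coprime to every d_i and every e_j. If −Σ_{j=1}^k ν_j Λ_{d_j m} + Σ_{j=1}^k ν_j Λ_{d_j} = −Σ_{j=1}^l μ_j Λ_{e_j m} + Σ_{j=1}^l μ_j Λ_{e_j} holds in ℤ[ℂ*], then k = l, and d_j = e_j and ν_j = μ_j for all j. -/
open scoped BigOperators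

/-- `Lam d` is the element `Λ_d` of the group ring `ℤ[ℂ*]`: the formal sum of all
`d`-th roots of unity, i.e. the divisor of `t^d - 1`. -/
noncomputable def Lam (d : ℕ) : MonoidAlgebra ℤ ℂˣ :=
  if h : d = 0 then 0 else
    haveI : NeZero d := ⟨h⟩
    haveI : Fintype (rootsOfUnity d ℂ) := Fintype.ofFinite _
    ∑ ζ : rootsOfUnity d ℂ, MonoidAlgebra.of ℤ ℂˣ (ζ : ℂˣ)

lemma exists_unit_root (n : ℕ) (hn : 0 < n) : ∃ u : ℂˣ, ∀ c : ℕ, (u ^ c = 1 ↔ n ∣ c) := by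
  have h := Complex.isPrimitiveRoot_exp n hn.ne'
  have hu := h.isUnit_unit hn.ne'
  exact ⟨(h.isUnit hn.ne').unit, fun c => hu.pow_eq_one_iff_dvd c⟩

lemma Lam_apply {d : ℕ} (hd : d ≠ 0) (u : ℂˣ) :
    (Lam d).coeff u = if u ^ d = 1 then 1 else 0 := by
  haveI : NeZero d := ⟨hd⟩
  classical
  rw [Lam, dif_neg hd, MonoidAlgebra.coeff_sum, Finset.sum_apply']
  simp only [MonoidAlgebra.of_apply, MonoidAlgebra.coeff_single, Finsupp.single_apply]
  by_cases h : u ^ d = 1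
  · rw [if_pos h]
    have hu : u ∈ rootsOfUnity d ℂ := (mem_rootsOfUnity d u).2 h
    rw [Finset.sum_eq_single (⟨u, hu⟩ : rootsOfUnity d ℂ)]
    · simp
    · intro b _ hb
      rw [if_neg]
      intro hbu
      exact hb (Subtype.ext hbu)
    · simp
  · rw [if_neg h]
    apply Finset.sum_eq_zero
    intro b _
    rw [if_neg]
    intro hbu
    apply h
    rw [← hbu]
    exact_mod_cast ((mem_rootsOfUnity d _).1 b.2)

lemma sum_smul_Lam_apply (k : ℕ) (ν : Fin k → ℤ) (d : Fin k → ℕ) (hd : ∀ i, d i ≠ 0) (u : ℂˣ) :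
    ((∑ j, ν j • Lam (d j)) : MonoidAlgebra ℤ ℂˣ).coeff u
      = ∑ j, (if u ^ (d j) = 1 then ν j else 0) := by
  rw [MonoidAlgebra.coeff_sum, Finset.sum_apply']
  refine Finset.sum_congr rfl fun j _ => ?_
  rw [MonoidAlgebra.coeff_smul, Finsupp.smul_apply, Lam_apply (hd j), smul_eq_mul, mul_ite, mul_one, mul_zero]

/-- Generic tail-vanishing lemma for range sums. -/
lemma sum_dvd_cutoff (k j a : ℕ) (D : ℕ → ℕ) (N : ℕ → ℤ) (hjk : j ≤ k)
    (hpos : ∀ t, t < k → 0 < D t)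
    (hbig : ∀ t, j ≤ t → t < k → D t < a) :
    ∑ t ∈ Finset.range k, (if a ∣ D t then N t else 0)
      = ∑ t ∈ Finset.range j, (if a ∣ D t then N t else 0) := by
  rw [← Finset.sum_range_add_sum_Ico _ hjk]
  have : ∑ t ∈ Finset.Ico j k, (if a ∣ D t then N t else 0) = 0 := by
    apply Finset.sum_eq_zero
    intro t ht
    rw [Finset.mem_Ico] at ht
    rw [if_neg]
    intro hdvd
    have hlt := hbig t ht.1 ht.2
    exact absurd (Nat.le_of_dvd (hpos t ht.2) hdvd) (by omega)
  rw [this, add_zero]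

theorem lam_join_identity_unique (k l : ℕ)
    (ν : Fin k → ℤ) (d : Fin k → ℕ) (μ : Fin l → ℤ) (e : Fin l → ℕ)
    (hd : ∀ i, 0 < d i) (he : ∀ j, 0 < e j)
    (hdanti : StrictAnti d) (heanti : StrictAnti e)
    (hν : ∀ i, ν i ≠ 0) (hμ : ∀ j, μ j ≠ 0)
    (m : ℕ) (hm : 1 < m)
    (hmd : ∀ i, Nat.Coprime m (d i)) (hme : ∀ j, Nat.Coprime m (e j))
    (heq : -∑ j, ν j • Lam (d j * m) + ∑ j, ν j • Lam (d j)
         = -∑ j, μ j • Lam (e j * m) + ∑ j, μ j • Lam (e j)) :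
    ∃ h : k = l, ∀ j : Fin k, d j = e (Fin.cast h j) ∧ ν j = μ (Fin.cast h j) := by
  classical
  have hm0 : 0 < m := by omega
  set D : ℕ → ℕ := fun t => if h : t < k then d ⟨t, h⟩ else 1 with hDdef
  set E : ℕ → ℕ := fun t => if h : t < l then e ⟨t, h⟩ else 1 with hEdef
  set N : ℕ → ℤ := fun t => if h : t < k then ν ⟨t, h⟩ else 0 with hNdef
  set M : ℕ → ℤ := fun t => if h : t < l then μ ⟨t, h⟩ else 0 with hMdef
  have hD : ∀ (t) (h : t < k), D t = d ⟨t, h⟩ := fun t h => by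
    simp only [hDdef, dif_pos h]
  have hE : ∀ (t) (h : t < l), E t = e ⟨t, h⟩ := fun t h => by
    simp only [hEdef, dif_pos h]
  have hN : ∀ (t) (h : t < k), N t = ν ⟨t, h⟩ := fun t h => by
    simp only [hNdef, dif_pos h]
  have hM : ∀ (t) (h : t < l), M t = μ ⟨t, h⟩ := fun t h => by
    simp only [hMdef, dif_pos h]
  have hDpos : ∀ t, t < k → 0 < D t := fun t h => by rw [hD t h]; exact hd _
  have hEpos : ∀ t, t < l → 0 < E t := fun t h => by rw [hE t h]; exact he _
  have hNne : ∀ t, t < k → N t ≠ 0 := fun t h => by rw [hN t h]; exact hν _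
  have hMne : ∀ t, t < l → M t ≠ 0 := fun t h => by rw [hM t h]; exact hμ _
  have hDanti : ∀ s t, s < t → t < k → D t < D s := by
    intro s t hst htk
    have hsk : s < k := by omega
    rw [hD t htk, hD s hsk]
    exact hdanti (Fin.mk_lt_mk.mpr hst)
  have hEanti : ∀ s t, s < t → t < l → E t < E s := by
    intro s t hst htl
    have hsl : s < l := by omega
    rw [hE t htl, hE s hsl]
    exact heanti (Fin.mk_lt_mk.mpr hst)
  have hDle : ∀ s t, s ≤ t → t < k → D t ≤ D s := by
    intro s t hst htk
    rcases eq_or_lt_of_le hst with rfl | h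
    · exact le_refl _
    · exact (hDanti s t h htk).le
  have hEle : ∀ s t, s ≤ t → t < l → E t ≤ E s := by
    intro s t hst htl
    rcases eq_or_lt_of_le hst with rfl | h
    · exact le_refl _
    · exact (hEanti s t h htl).le
  -- The key coefficient identity
  have key : ∀ a : ℕ, 0 < a →
      (∑ t ∈ Finset.range k, (if a ∣ D t then N t else 0))
        = ∑ t ∈ Finset.range l, (if a ∣ E t then M t else 0) := by
    intro a ha
    obtain ⟨u, hu⟩ := exists_unit_root (a * m) (Nat.mul_pos ha hm0)
    have h0 : (-∑ j, ν j • Lam (d j * m) + ∑ j, ν j • Lam (d j)).coeff u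
        = (-∑ j, μ j • Lam (e j * m) + ∑ j, μ j • Lam (e j)).coeff u := by rw [heq]
    rw [MonoidAlgebra.coeff_add, MonoidAlgebra.coeff_add, MonoidAlgebra.coeff_neg,
      MonoidAlgebra.coeff_neg, Finsupp.add_apply, Finsupp.add_apply, Finsupp.neg_apply, Finsupp.neg_apply,
      sum_smul_Lam_apply k ν (fun j => d j * m)
        (fun j => Nat.mul_ne_zero (hd j).ne' hm0.ne') u,
      sum_smul_Lam_apply k ν d (fun j => (hd j).ne') u,
      sum_smul_Lam_apply l μ (fun j => e j * m)
        (fun j => Nat.mul_ne_zero (he j).ne' hm0.ne') u,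
      sum_smul_Lam_apply l μ e (fun j => (he j).ne') u] at h0
    have e2 : ∑ j : Fin k, (if u ^ (d j) = 1 then ν j else 0) = 0 := by
      refine Finset.sum_eq_zero fun j _ => if_neg ?_
      rw [hu]
      intro hdvd
      have hmdvd : m ∣ d j := (dvd_mul_left m a).trans hdvd
      have := (hmd j).eq_one_of_dvd ?_
      · omega
      · exact hmdvd
    have e4 : ∑ j : Fin l, (if u ^ (e j) = 1 then μ j else 0) = 0 := by
      refine Finset.sum_eq_zero fun j _ => if_neg ?_
      rw [hu]
      intro hdvd
      have hmdvd : m ∣ e j := (dvd_mul_left m a).trans hdvd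
      have := (hme j).eq_one_of_dvd ?_
      · omega
      · exact hmdvd
    have e1 : ∑ j : Fin k, (if u ^ (d j * m) = 1 then ν j else 0)
        = ∑ j : Fin k, (if a ∣ d j then ν j else 0) :=
      Finset.sum_congr rfl fun j _ => by
        simp only [hu, Nat.mul_dvd_mul_iff_right hm0]
    have e3 : ∑ j : Fin l, (if u ^ (e j * m) = 1 then μ j else 0)
        = ∑ j : Fin l, (if a ∣ e j then μ j else 0) :=
      Finset.sum_congr rfl fun j _ => by
        simp only [hu, Nat.mul_dvd_mul_iff_right hm0]
    rw [e1, e2, e3, e4, add_zero, add_zero, neg_inj] at h0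
    calc ∑ t ∈ Finset.range k, (if a ∣ D t then N t else 0)
        = ∑ j : Fin k, (if a ∣ D (j : ℕ) then N (j : ℕ) else 0) :=
          (Fin.sum_univ_eq_sum_range (fun t => if a ∣ D t then N t else 0) k).symm
      _ = ∑ j : Fin k, (if a ∣ d j then ν j else 0) := by
          refine Finset.sum_congr rfl fun j _ => by
            rw [hD _ j.isLt, hN _ j.isLt, Fin.eta]
      _ = ∑ j : Fin l, (if a ∣ e j then μ j else 0) := h0
      _ = ∑ j : Fin l, (if a ∣ E (j : ℕ) then M (j : ℕ) else 0) := by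
          refine Finset.sum_congr rfl fun j _ => by
            rw [hE _ j.isLt, hM _ j.isLt, Fin.eta]
      _ = ∑ t ∈ Finset.range l, (if a ∣ E t then M t else 0) :=
          Fin.sum_univ_eq_sum_range (fun t => if a ∣ E t then M t else 0) l
  -- The combinatorial part
  have main : ∀ j, j < k → j < l → D j = E j ∧ N j = M j := by
    intro j
    induction j using Nat.strong_induction_on with
    | _ j IH =>
    intro hjk hjl
    have hprefix : ∀ a : ℕ,
        (∑ t ∈ Finset.range j, (if a ∣ D t then N t else 0))
          = ∑ t ∈ Finset.range j, (if a ∣ E t then M t else 0) := by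
      intro a
      refine Finset.sum_congr rfl fun t ht => ?_
      rw [Finset.mem_range] at ht
      obtain ⟨h1, h2⟩ := IH t ht (by omega) (by omega)
      rw [h1, h2]
    have hDE : D j = E j := by
      by_contra hne
      rcases lt_or_gt_of_ne hne with hlt | hlt
      · -- D j < E j ; evaluate at a = E j
        have h := key (E j) (hEpos j hjl)
        rw [sum_dvd_cutoff k j (E j) D N hjk.le hDpos
            (fun t htj htk => lt_of_le_of_lt (hDle j t htj htk) hlt),
          sum_dvd_cutoff l (j + 1) (E j) E M hjl hEpos
            (fun t htj htl => hEanti j t (by omega) htl),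
          Finset.sum_range_succ, if_pos (dvd_refl _), hprefix (E j)] at h
        exact hMne j hjl (by omega)
      · -- E j < D j ; evaluate at a = D j
        have h := key (D j) (hDpos j hjk)
        rw [sum_dvd_cutoff l j (D j) E M hjl.le hEpos
            (fun t htj htl => lt_of_le_of_lt (hEle j t htj htl) hlt),
          sum_dvd_cutoff k (j + 1) (D j) D N hjk hDpos
            (fun t htj htk => hDanti j t (by omega) htk),
          Finset.sum_range_succ, if_pos (dvd_refl _), hprefix (D j)] at h
        exact hNne j hjk (by omega)
    refine ⟨hDE, ?_⟩
    have h := key (D j) (hDpos j hjk)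
    rw [sum_dvd_cutoff k (j + 1) (D j) D N hjk hDpos
        (fun t htj htk => hDanti j t (by omega) htk),
      sum_dvd_cutoff l (j + 1) (D j) E M hjl hEpos
        (fun t htj htl => hDE ▸ hEanti j t (by omega) htl),
      Finset.sum_range_succ, Finset.sum_range_succ, if_pos (dvd_refl _),
      if_pos (hDE ▸ dvd_refl (D j)), hprefix (D j)] at h
    omega
  have hkl : k = l := by
    by_contra hne
    rcases lt_or_gt_of_ne hne with hlt | hlt
    · -- k < l ; evaluate at a = E k
      have h := key (E k) (hEpos k hlt)
      rw [sum_dvd_cutoff l (k + 1) (E k) E M hlt hEpos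
          (fun t htj htl => hEanti k t (by omega) htl),
        Finset.sum_range_succ, if_pos (dvd_refl _)] at h
      have hpre : (∑ t ∈ Finset.range k, (if E k ∣ D t then N t else 0))
          = ∑ t ∈ Finset.range k, (if E k ∣ E t then M t else 0) := by
        refine Finset.sum_congr rfl fun t ht => ?_
        rw [Finset.mem_range] at ht
        obtain ⟨h1, h2⟩ := main t ht (by omega)
        rw [h1, h2]
      rw [hpre] at h
      exact hMne k hlt (by omega)
    · -- l < k ; evaluate at a = D l
      have h := key (D l) (hDpos l hlt)
      rw [sum_dvd_cutoff k (l + 1) (D l) D N hlt hDpos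
          (fun t htj htk => hDanti l t (by omega) htk),
        Finset.sum_range_succ, if_pos (dvd_refl _)] at h
      have hpre : (∑ t ∈ Finset.range l, (if D l ∣ D t then N t else 0))
          = ∑ t ∈ Finset.range l, (if D l ∣ E t then M t else 0) := by
        refine Finset.sum_congr rfl fun t ht => ?_
        rw [Finset.mem_range] at ht
        obtain ⟨h1, h2⟩ := main t (by omega) ht
        rw [h1, h2]
      rw [hpre] at h
      exact hNne l hlt (by omega)
  refine ⟨hkl, fun j => ?_⟩
  obtain ⟨h1, h2⟩ := main j.val j.isLt (hkl ▸ j.isLt)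
  rw [hD _ j.isLt, hE _ (hkl ▸ j.isLt), Fin.eta] at h1
  rw [hN _ j.isLt, hM _ (hkl ▸ j.isLt), Fin.eta] at h2
  have hc : (⟨(j : ℕ), hkl ▸ j.isLt⟩ : Fin l) = Fin.cast hkl j := rfl
  rw [hc] at h1 h2
  exact ⟨h1, h2⟩
end

section
/- Fix an integer m ≥ 1 with m odd or simply gcd(m+4, 4) arbitrary, and suppose Ξ = Σ_{i=1}^s ν_i Λ_{d_i} ∈ ℤ[ℂ*] with d_1 < … < d_s positive integers and ν_i nonzero integers satisfies (1 − Λ_2) · Ξ = 1 − 4Λ_4 − 3Λ_{4+m} (or = 1 − 3Λ_4 − 4Λ_{4+m}) in ℤ[ℂ*]. Then necessarily d_1 = 1 with ν_1 = 1, and d_2 = 2 with ν_2 = −1. -/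
open scoped BigOperators

/-- Evaluation at a group element, as an additive monoid hom. -/
noncomputable def ev (g : ℂˣ) : MonoidAlgebra ℤ ℂˣ →+ ℤ where
  toFun x := x.coeff g
  map_zero' := rfl
  map_add' _ _ := rfl

lemma ev_smul (g : ℂˣ) (c : ℤ) (x : MonoidAlgebra ℤ ℂˣ) : ev g (c • x) = c * ev g x := rfl

lemma ev_single (g u : ℂˣ) (r : ℤ) : ev g (MonoidAlgebra.single u r) =
    if u = g then r else 0 := Finsupp.single_apply

lemma ev_lam {d : ℕ} (hd : d ≠ 0) (g : ℂˣ) :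
    ev g (Lam d) = if g ^ d = 1 then 1 else 0 := by
  classical
  haveI : NeZero d := ⟨hd⟩
  rw [Lam, dif_neg hd, map_sum]
  by_cases h : g ^ d = 1
  · have hg : g ∈ rootsOfUnity d ℂ := (mem_rootsOfUnity d g).mpr h
    rw [if_pos h, Finset.sum_eq_single (⟨g, hg⟩ : rootsOfUnity d ℂ)]
    · simp [MonoidAlgebra.of_apply, ev_single]
    · intro b _ hb
      rw [MonoidAlgebra.of_apply, ev_single, if_neg (fun he => hb (Subtype.ext he))]
    · intro h'; exact absurd (@Finset.mem_univ _ (Fintype.ofFinite _) _) h'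
  · rw [if_neg h]
    refine Finset.sum_eq_zero fun b _ => ?_
    rw [MonoidAlgebra.of_apply, ev_single, if_neg]
    intro he
    exact h (he ▸ (mem_rootsOfUnity d (b : ℂˣ)).mp b.2)

lemma units_sq {g : ℂˣ} : g ^ 2 = 1 ↔ g = 1 ∨ g = -1 := by
  constructor
  · intro h
    have h' : (g : ℂ) ^ 2 = 1 := by
      rw [← Units.val_pow_eq_pow_val, h, Units.val_one]
    rcases sq_eq_one_iff.mp h' with h1 | h1
    · exact Or.inl (Units.ext (by simpa using h1))
    · exact Or.inr (Units.ext (by simpa using h1))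
  · rintro (rfl | rfl) <;> [exact one_pow 2; exact neg_one_sq]

lemma units_neg_one_ne_one : (-1 : ℂˣ) ≠ 1 := by
  intro h
  have : (-1 : ℂ) = 1 := by
    have := congrArg (Units.val) h
    simpa using this
  norm_num at this

lemma lam_one : Lam 1 = 1 := by
  refine MonoidAlgebra.ext (Finsupp.ext fun g => ?_)
  have h1 : (1 : MonoidAlgebra ℤ ℂˣ).coeff g = ev g 1 := rfl
  have h2 : (Lam 1).coeff g = ev g (Lam 1) := rfl
  rw [h1, h2, ev_lam one_ne_zero, pow_one, MonoidAlgebra.one_def, ev_single]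
  by_cases h : g = 1
  · rw [if_pos h, if_pos h.symm]
  · rw [if_neg h, if_neg fun h' => h h'.symm]

lemma one_sub_lam_two :
    (1 : MonoidAlgebra ℤ ℂˣ) - Lam 2 = -(MonoidAlgebra.single (-1 : ℂˣ) (1 : ℤ)) := by
  have hlam : Lam 2 = MonoidAlgebra.single (1 : ℂˣ) (1 : ℤ)
      + MonoidAlgebra.single (-1 : ℂˣ) (1 : ℤ) := by
    refine MonoidAlgebra.ext (Finsupp.ext fun g => ?_)
    have h2 : (Lam 2).coeff g = ev g (Lam 2) := rfl
    have h3 : (MonoidAlgebra.single (1 : ℂˣ) (1 : ℤ)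
        + MonoidAlgebra.single (-1 : ℂˣ) (1 : ℤ)).coeff g
        = ev g (MonoidAlgebra.single (1 : ℂˣ) (1 : ℤ))
          + ev g (MonoidAlgebra.single (-1 : ℂˣ) (1 : ℤ)) := rfl
    rw [h2, h3, ev_lam two_ne_zero, ev_single, ev_single]
    by_cases h : g ^ 2 = 1
    · rw [if_pos h]
      rcases units_sq.mp h with rfl | rfl
      · simp [units_neg_one_ne_one]
      · simp [Ne.symm units_neg_one_ne_one]
    · rw [if_neg h, if_neg (fun h' : (1 : ℂˣ) = g => h (units_sq.mpr (Or.inl h'.symm))),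
        if_neg (fun h' : (-1 : ℂˣ) = g => h (units_sq.mpr (Or.inr h'.symm))), add_zero]
  rw [hlam, MonoidAlgebra.one_def]
  abel

lemma single_neg_one_mul_lam {e : ℕ} (he : e ≠ 0) (h : (-1 : ℂˣ) ^ e = 1) :
    (MonoidAlgebra.single (-1 : ℂˣ) (1 : ℤ)) * Lam e = Lam e := by
  refine MonoidAlgebra.ext (Finsupp.ext fun g => ?_)
  rw [MonoidAlgebra.coeff_single_mul_apply, one_mul]
  have h2 : ∀ u : ℂˣ, (Lam e).coeff u = ev u (Lam e) := fun _ => rfl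
  rw [h2, h2, ev_lam he, ev_lam he]
  congr 1
  rw [mul_pow, inv_pow, h, inv_one, one_mul]

lemma single_neg_one_mul_lam_odd {e : ℕ} (he : e ≠ 0) (h : (-1 : ℂˣ) ^ e = -1) :
    (MonoidAlgebra.single (-1 : ℂˣ) (1 : ℤ)) * Lam e = Lam (2 * e) - Lam e := by
  refine MonoidAlgebra.ext (Finsupp.ext fun g => ?_)
  rw [MonoidAlgebra.coeff_single_mul_apply, one_mul]
  have h2 : ∀ u : ℂˣ, (Lam e).coeff u = ev u (Lam e) := fun _ => rfl
  have h3 : (Lam (2 * e) - Lam e).coeff g = ev g (Lam (2 * e)) - ev g (Lam e) := rfl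
  rw [h2, h3, ev_lam he, ev_lam he, ev_lam (by omega : 2 * e ≠ 0)]
  have hcond : (((-1 : ℂˣ)⁻¹ * g) ^ e = 1) ↔ g ^ e = -1 := by
    rw [mul_pow, inv_pow, h, inv_mul_eq_one]; exact eq_comm
  have h2e : g ^ (2 * e) = (g ^ e) ^ 2 := by rw [mul_comm, pow_mul]
  simp only [hcond, h2e]
  by_cases hx : g ^ e = 1
  · rw [if_neg (fun h' => units_neg_one_ne_one (hx ▸ h').symm),
      if_pos (by rw [hx, one_pow]), if_pos hx, sub_self]
  · by_cases hy : g ^ e = -1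
    · rw [if_pos hy, if_pos (by rw [hy, neg_one_sq]), if_neg hx, sub_zero]
    · rw [if_neg hy, if_neg hx, if_neg, sub_zero]
      intro h'
      rcases units_sq.mp h' with h'' | h''
      · exact hx h''
      · exact hy h''

lemma exists_orderOf_eq {n : ℕ} (hn : n ≠ 0) : ∃ g : ℂˣ, orderOf g = n := by
  have h := Complex.isPrimitiveRoot_exp n hn
  exact ⟨(h.isUnit hn).unit,
    ((h.isUnit_unit hn).eq_orderOf).symm⟩

lemma lam_indep (S : Finset ℕ) : 0 ∉ S → ∀ c : ℕ → ℤ,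
    ∑ n ∈ S, c n • Lam n = 0 → ∀ n ∈ S, c n = 0 := by
  classical
  induction S using Finset.induction_on_max with
  | empty => intro _ c _ n hn; exact absurd hn (Finset.notMem_empty n)
  | insert a S hlt ih =>
    intro h0 c hsum
    have ha0 : a ≠ 0 := fun h => h0 (h ▸ Finset.mem_insert_self a S)
    have haS : a ∉ S := fun h => lt_irrefl a (hlt a h)
    rw [Finset.sum_insert haS] at hsum
    obtain ⟨g, hg⟩ := exists_orderOf_eq ha0
    have hga : g ^ a = 1 := hg ▸ pow_orderOf_eq_one g
    have hterm : ∀ b ∈ S, ev g (c b • Lam b) = 0 := by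
      intro b hb
      have hb0 : b ≠ 0 := fun h => h0 (h ▸ Finset.mem_insert_of_mem hb)
      rw [ev_smul, ev_lam hb0, if_neg, mul_zero]
      intro hpow
      have hdvd : a ∣ b := hg ▸ orderOf_dvd_of_pow_eq_one hpow
      exact absurd (Nat.le_of_dvd (Nat.pos_of_ne_zero hb0) hdvd)
        (not_le_of_gt (hlt b hb))
    have hca : c a = 0 := by
      have happ := congrArg (ev g) hsum
      rw [map_add, map_sum, map_zero, Finset.sum_eq_zero hterm, add_zero,
        ev_smul, ev_lam ha0, if_pos hga, mul_one] at happ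
      exact happ
    have hrest : ∑ n ∈ S, c n • Lam n = 0 := by
      rw [hca, zero_smul, zero_add] at hsum; exact hsum
    intro n hn
    rcases Finset.mem_insert.mp hn with rfl | hn'
    · exact hca
    · exact ih (fun h => h0 (Finset.mem_insert_of_mem h)) c hrest n hn'

lemma key (m : ℕ) (hm : 1 ≤ m) (a b : ℤ)
    (s : ℕ) (ν : Fin s → ℤ) (d : Fin s → ℕ)
    (hd : ∀ i, 0 < d i) (hmono : StrictMono d) (hν : ∀ i, ν i ≠ 0)
    (heq : (1 - Lam 2) * (∑ i, ν i • Lam (d i)) = 1 - a • Lam 4 - b • Lam (4 + m)) :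
    ∃ (h1 : 0 < s) (h2 : 1 < s),
      d ⟨0, h1⟩ = 1 ∧ ν ⟨0, h1⟩ = 1 ∧ d ⟨1, h2⟩ = 2 ∧ ν ⟨1, h2⟩ = -1 := by
  classical
  set Ξ : MonoidAlgebra ℤ ℂˣ := ∑ i, ν i • Lam (d i) with hΞdef
  set N : MonoidAlgebra ℤ ℂˣ := -(MonoidAlgebra.single (-1 : ℂˣ) (1 : ℤ)) with hNdef
  have hunit : N * N = 1 := by
    rw [hNdef, neg_mul_neg, MonoidAlgebra.single_mul_single, MonoidAlgebra.one_def]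
    congr 1 <;> norm_num
  rw [one_sub_lam_two] at heq
  have hXi0 : Ξ = N * (1 - a • Lam 4 - b • Lam (4 + m)) := by
    calc Ξ = 1 * Ξ := (one_mul Ξ).symm
    _ = (N * N) * Ξ := by rw [hunit]
    _ = N * (N * Ξ) := mul_assoc _ _ _
    _ = N * (1 - a • Lam 4 - b • Lam (4 + m)) := by rw [heq]
  have hN4 : N * Lam 4 = -(Lam 4) := by
    rw [hNdef, neg_mul, single_neg_one_mul_lam (by norm_num)
      (Even.neg_one_pow (⟨2, by norm_num⟩ : Even 4))]
  -- unified description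
  obtain ⟨p, q, hXi⟩ : ∃ p q : ℤ, Ξ = (1 : ℤ) • Lam 1 + (-1 : ℤ) • Lam 2 + a • Lam 4
      + p • Lam (4 + m) + q • Lam (2 * (4 + m)) := by
    rcases Nat.even_or_odd m with hme | hmo
    · refine ⟨b, 0, ?_⟩
      have hev : Even (4 + m) := by
        obtain ⟨k, rfl⟩ := hme; exact ⟨2 + k, by ring⟩
      have hNm : N * Lam (4 + m) = -(Lam (4 + m)) := by
        rw [hNdef, neg_mul, single_neg_one_mul_lam (by omega) (Even.neg_one_pow hev)]
      rw [hXi0, mul_sub, mul_sub, mul_one, mul_smul_comm, mul_smul_comm, hN4, hNm,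
        hNdef, ← one_sub_lam_two, lam_one]
      push_cast
      module
    · refine ⟨-b, b, ?_⟩
      have hNm : N * Lam (4 + m) = -(Lam (2 * (4 + m)) - Lam (4 + m)) := by
        have hod : Odd (4 + m) := by
          obtain ⟨k, rfl⟩ := hmo; exact ⟨k + 2, by ring⟩
        rw [hNdef, neg_mul, single_neg_one_mul_lam_odd (by omega) (Odd.neg_one_pow hod)]
      rw [hXi0, mul_sub, mul_sub, mul_one, mul_smul_comm, mul_smul_comm, hN4, hNm,
        hNdef, ← one_sub_lam_two, lam_one]
      push_cast
      module
  -- set up independence argument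
  set c₀ : ℕ → ℤ := fun n => if n = 1 then 1 else if n = 2 then -1 else if n = 4 then a
      else if n = 4 + m then p else if n = 2 * (4 + m) then q else 0 with hc₀def
  set fib : ℕ → ℤ := fun n => ∑ i ∈ Finset.univ.filter (fun i => d i = n), ν i with hfibdef
  set T : Finset ℕ := {1, 2, 4, 4 + m, 2 * (4 + m)} with hTdef
  set S : Finset ℕ := (Finset.image d Finset.univ) ∪ T with hSdef
  have e1 : c₀ 1 = 1 := by simp [hc₀def]
  have e2 : c₀ 2 = -1 := by simp [hc₀def]
  have e4 : c₀ 4 = a := by simp [hc₀def]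
  have e5 : c₀ (4 + m) = p := by
    simp only [hc₀def]
    rw [if_neg (by omega), if_neg (by omega), if_neg (by omega)]
    simp
  have e6 : c₀ (2 * (4 + m)) = q := by
    simp only [hc₀def]
    rw [if_neg (by omega), if_neg (by omega), if_neg (by omega), if_neg (by omega)]
    simp
  have e0 : ∀ n, n ∉ T → c₀ n = 0 := by
    intro n hn
    simp only [hTdef, Finset.mem_insert, Finset.mem_singleton, not_or] at hn
    obtain ⟨n1, n2, n4, n5, n6⟩ := hn
    simp only [hc₀def]
    rw [if_neg n1, if_neg n2, if_neg n4, if_neg n5, if_neg n6]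
  have hTsub : T ⊆ S := Finset.subset_union_right
  have hT : ∑ n ∈ T, c₀ n • Lam n = Ξ := by
    rw [hTdef]
    rw [Finset.sum_insert (by simp only [Finset.mem_insert, Finset.mem_singleton]; omega),
      Finset.sum_insert (by simp only [Finset.mem_insert, Finset.mem_singleton]; omega),
      Finset.sum_insert (by simp only [Finset.mem_insert, Finset.mem_singleton]; omega),
      Finset.sum_insert (by simp only [Finset.mem_singleton]; omega),
      Finset.sum_singleton, e1, e2, e4, e5, e6, hXi]
    abel
  have hST : ∑ n ∈ S, c₀ n • Lam n = Ξ := by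
    rw [← Finset.sum_subset hTsub (fun x _ hx => by rw [e0 x hx, zero_smul]), hT]
  have hSfib : ∑ n ∈ S, fib n • Lam n = Ξ := by
    have hcong : ∀ n ∈ S, fib n • Lam n
        = ∑ i ∈ Finset.univ.filter (fun i => d i = n), ν i • Lam (d i) := by
      intro n _
      rw [hfibdef, Finset.sum_smul]
      exact Finset.sum_congr rfl fun i hi => by rw [(Finset.mem_filter.mp hi).2]
    rw [Finset.sum_congr rfl hcong,
      Finset.sum_fiberwise_of_maps_to (fun i _ => Finset.mem_union_left _
        (Finset.mem_image_of_mem d (Finset.mem_univ i)))]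
  have hzero : ∑ n ∈ S, (fib n - c₀ n) • Lam n = 0 := by
    simp only [sub_smul]
    rw [Finset.sum_sub_distrib, hSfib, hST, sub_self]
  have h0S : (0 : ℕ) ∉ S := by
    intro h
    rcases Finset.mem_union.mp h with h' | h'
    · obtain ⟨i, _, hi⟩ := Finset.mem_image.mp h'
      exact absurd hi (by have := hd i; omega)
    · simp only [hTdef, Finset.mem_insert, Finset.mem_singleton] at h'
      omega
  have hc := lam_indep S h0S (fun n => fib n - c₀ n) hzero
  -- extract data at 1
  have hS1 : (1 : ℕ) ∈ S := hTsub (by simp [hTdef])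
  have hS2 : (2 : ℕ) ∈ S := hTsub (by simp [hTdef])
  have hfib1 : fib 1 = 1 := by
    have h := hc 1 hS1; simp only [e1] at h; omega
  have hfib2 : fib 2 = -1 := by
    have h := hc 2 hS2; simp only [e2] at h; omega
  have hex1 : ∃ i, d i = 1 := by
    by_contra h
    push_neg at h
    have hemp : Finset.univ.filter (fun i => d i = 1) = ∅ :=
      Finset.filter_eq_empty_iff.mpr (fun i _ => h i)
    rw [hfibdef] at hfib1
    simp only [hemp, Finset.sum_empty] at hfib1
    exact one_ne_zero hfib1.symm
  obtain ⟨i1, hi1⟩ := hex1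
  have h1 : 0 < s := i1.pos
  have hd0 : d ⟨0, h1⟩ = 1 := by
    have hle : d ⟨0, h1⟩ ≤ d i1 := hmono.monotone (Fin.le_def.mpr (Nat.zero_le _))
    have := hd ⟨0, h1⟩
    omega
  have hfil1 : Finset.univ.filter (fun i => d i = 1) = {⟨0, h1⟩} := by
    apply Finset.eq_singleton_iff_unique_mem.mpr
    exact ⟨Finset.mem_filter.mpr ⟨Finset.mem_univ _, hd0⟩,
      fun j hj => hmono.injective (by rw [(Finset.mem_filter.mp hj).2, hd0])⟩
  have hν0 : ν ⟨0, h1⟩ = 1 := by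
    rw [hfibdef] at hfib1
    simp only [hfil1, Finset.sum_singleton] at hfib1
    exact hfib1
  -- extract data at 2
  have hex2 : ∃ i, d i = 2 := by
    by_contra h
    push_neg at h
    have hemp : Finset.univ.filter (fun i => d i = 2) = ∅ :=
      Finset.filter_eq_empty_iff.mpr (fun i _ => h i)
    rw [hfibdef] at hfib2
    simp only [hemp, Finset.sum_empty] at hfib2
    omega
  obtain ⟨i2, hi2⟩ := hex2
  have hne : i2 ≠ ⟨0, h1⟩ := fun h => by rw [h, hd0] at hi2; omega
  have hi2ge : 1 ≤ (i2 : ℕ) := by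
    rcases Nat.eq_zero_or_pos (i2 : ℕ) with h' | h'
    · exact absurd (Fin.ext h' : i2 = ⟨0, h1⟩) hne
    · exact h'
  have h2 : 1 < s := lt_of_le_of_lt hi2ge i2.isLt
  have hd1 : d ⟨1, h2⟩ = 2 := by
    have hle : d ⟨1, h2⟩ ≤ d i2 := hmono.monotone (Fin.le_def.mpr hi2ge)
    have hgt : d ⟨0, h1⟩ < d ⟨1, h2⟩ := hmono (Fin.lt_def.mpr (by norm_num))
    omega
  have hfil2 : Finset.univ.filter (fun i => d i = 2) = {⟨1, h2⟩} := by
    apply Finset.eq_singleton_iff_unique_mem.mpr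
    exact ⟨Finset.mem_filter.mpr ⟨Finset.mem_univ _, hd1⟩,
      fun j hj => hmono.injective (by rw [(Finset.mem_filter.mp hj).2, hd1])⟩
  have hν1 : ν ⟨1, h2⟩ = -1 := by
    rw [hfibdef] at hfib2
    simp only [hfil2, Finset.sum_singleton] at hfib2
    exact hfib2
  exact ⟨h1, h2, hd0, hν0, hd1, hν1⟩

theorem lam_multiplicity_two_exclusion (m : ℕ) (hm : 1 ≤ m)
    (s : ℕ) (ν : Fin s → ℤ) (d : Fin s → ℕ)
    (hd : ∀ i, 0 < d i) (hmono : StrictMono d) (hν : ∀ i, ν i ≠ 0)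
    (heq : (1 - Lam 2) * (∑ i, ν i • Lam (d i)) = 1 - (4 : ℤ) • Lam 4 - (3 : ℤ) • Lam (4 + m)
      ∨ (1 - Lam 2) * (∑ i, ν i • Lam (d i)) = 1 - (3 : ℤ) • Lam 4 - (4 : ℤ) • Lam (4 + m)) :
    ∃ (h1 : 0 < s) (h2 : 1 < s),
      d ⟨0, h1⟩ = 1 ∧ ν ⟨0, h1⟩ = 1 ∧ d ⟨1, h2⟩ = 2 ∧ ν ⟨1, h2⟩ = -1 := by
  rcases heq with h | h
  · exact key m hm 4 3 s ν d hd hmono hν h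
  · exact key m hm 3 4 s ν d hd hmono hν h
end
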